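/- Let M be a finite set with m elements and μ a probability distribution on the power set of M. For every ε > 0 there exists δ > 0 such that for every probability distribution μ' on the power set of M satisfying |Pr_μ[F_ℓ^k] − Pr_{μ'}[F_ℓ^k]| < δ for all ℓ ∈ {0,1,…,m} and all k ∈ {1,…,binom(m,ℓ)}, the following holds: for every ℓ ∈ {0,1,…,m} there is a bijection σ_ℓ of the ℓ-element subsets of M such that |μ(X^↑) − μ'(σ_ℓ(X)^↑)| < ε for every ℓ-element subset X of M. -/

import Mathlib

open Finset

/-- `μ(X^↑)`: the mass that the distribution `μ` on the power set of `M` gives to the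
filter generated by `X`, i.e. `∑_{Y ⊇ X} μ({Y})`. -/
def filterMass {M : Type} [Fintype M] [DecidableEq M] (μ : Finset M → ℝ) (X : Finset M) : ℝ :=
  ∑ Y ∈ Finset.univ.filter (fun Y => X ⊆ Y), μ Y

/-- `Pr_μ[F_ℓ^k]`: the probability that `k` independent `μ`-random subsets of `M`
have intersection of size at least `ℓ`. -/
def prF {M : Type} [Fintype M] [DecidableEq M] (μ : Finset M → ℝ) (ℓ k : ℕ) : ℝ :=
  ∑ X : Fin k → Finset M,
    if ℓ ≤ (Finset.univ.inf X).card then ∏ i, μ (X i) else 0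

/- ### Auxiliary lemmas -/

lemma univ_val_map_perm {n : ℕ} (h : Fin n → ℝ) (σ : Equiv.Perm (Fin n)) :
    (Finset.univ.val.map (h ∘ σ) : Multiset ℝ) = Finset.univ.val.map h := by
  rw [← Multiset.map_map]
  congr 1
  have : (Finset.univ : Finset (Fin n)).val.map σ = (Finset.univ.map σ.toEmbedding).val := by
    simp [Finset.map]
  rw [this, Finset.map_univ_equiv]

/-- Two functions on a finite type with the same multiset of values differ by a
permutation of the domain. -/
lemma exists_perm_of_map_eq {ι : Type*} [Fintype ι] [DecidableEq ι] (f g : ι → ℝ)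
    (h : (Finset.univ.val.map f : Multiset ℝ) = Finset.univ.val.map g) :
    ∃ σ : Equiv.Perm ι, ∀ i, f i = g (σ i) := by
  set e := Fintype.equivFin ι
  set f' := f ∘ e.symm with hf'
  set g' := g ∘ e.symm with hg'
  have huniv : ∀ h : ι → ℝ,
      (Finset.univ.val.map (h ∘ e.symm) : Multiset ℝ) = Finset.univ.val.map h := by
    intro h
    rw [← Multiset.map_map]
    congr 1
    have : (Finset.univ : Finset (Fin _)).val.map e.symm
        = (Finset.univ.map e.symm.toEmbedding).val := by
      simp [Finset.map]
    rw [this, Finset.map_univ_equiv]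
  have hm : (Finset.univ.val.map f' : Multiset ℝ) = Finset.univ.val.map g' := by
    rw [hf', hg', huniv, huniv, h]
  set σf := Tuple.sort f'
  set σg := Tuple.sort g'
  have hlist : List.ofFn (f' ∘ σf) = List.ofFn (g' ∘ σg) := by
    refine List.Perm.eq_of_sortedLE (List.sortedLE_ofFn_iff.2 (Tuple.monotone_sort f'))
      (List.sortedLE_ofFn_iff.2 (Tuple.monotone_sort g')) ?_
    rw [← Multiset.coe_eq_coe]
    have h1 : ((List.ofFn (f' ∘ σf) : List ℝ) : Multiset ℝ)
        = Finset.univ.val.map (f' ∘ σf) := by simp; exact List.Perm.refl _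
    have h2 : ((List.ofFn (g' ∘ σg) : List ℝ) : Multiset ℝ)
        = Finset.univ.val.map (g' ∘ σg) := by simp; exact List.Perm.refl _
    rw [h1, h2, univ_val_map_perm, univ_val_map_perm, hm]
  have hfun : f' ∘ σf = g' ∘ σg := List.ofFn_injective hlist
  refine ⟨e.trans ((σf.symm.trans σg).trans e.symm), fun i => ?_⟩
  have : f' (σf (σf.symm (e i))) = g' (σg (σf.symm (e i))) := congrFun hfun _
  simpa [f', g'] using this

/-- Newton's identity for a multiset of real numbers. -/
lemma multiset_newton (s : Multiset ℝ) (k : ℕ) :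
    (k : ℝ) * s.esymm k = (-1) ^ (k + 1) *
      ∑ a ∈ (antidiagonal k).filter (fun a => a.1 < k),
        (-1 : ℝ) ^ a.1 * s.esymm a.1 * (s.map (· ^ a.2)).sum := by
  obtain ⟨l, rfl⟩ : ∃ l : List ℝ, (l : Multiset ℝ) = s := ⟨s.toList, s.coe_toList⟩
  set n := l.length
  set x : Fin n → ℝ := l.get
  have hx : (Finset.univ.val.map x : Multiset ℝ) = (l : Multiset ℝ) := by
    simp [x]; exact List.Perm.of_eq List.ofFn_getElem
  have H := congrArg (MvPolynomial.aeval x) (MvPolynomial.mul_esymm_eq_sum (Fin n) ℝ k)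
  simp only [map_mul, map_sum, map_pow, map_neg, map_one, map_natCast,
    MvPolynomial.aeval_esymm_eq_multiset_esymm, hx] at H
  convert H using 2
  refine Finset.sum_congr rfl fun a _ => ?_
  congr 1
  rw [MvPolynomial.psum, map_sum]
  simp only [map_pow, MvPolynomial.aeval_X]
  rw [← hx, Multiset.map_map, Finset.sum]
  rfl

/-- Two multisets of reals of the same cardinality `N` with equal power sums `p_1, …, p_N`
are equal. -/
lemma multiset_eq_of_psum_eq (s t : Multiset ℝ) (hc : Multiset.card s = Multiset.card t)
    (h : ∀ k, 1 ≤ k → k ≤ Multiset.card s → (s.map (· ^ k)).sum = (t.map (· ^ k)).sum) :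
    s = t := by
  have hes : ∀ k, k ≤ Multiset.card s → s.esymm k = t.esymm k := by
    intro k
    induction k using Nat.strong_induction_on with
    | _ k IH =>
      intro hk
      rcases Nat.eq_zero_or_pos k with rfl | hk1
      · simp [Multiset.esymm]
      · have hmul : (k : ℝ) * s.esymm k = (k : ℝ) * t.esymm k := by
          rw [multiset_newton, multiset_newton]
          congr 1
          refine Finset.sum_congr rfl fun a ha => ?_
          simp only [Finset.mem_filter, Finset.HasAntidiagonal.mem_antidiagonal] at ha
          rw [IH a.1 ha.2 (le_trans (le_of_lt ha.2) hk),
            h a.2 (by omega) (by omega)]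
        exact mul_left_cancel₀ (by exact_mod_cast hk1.ne') hmul
  have hprod : (s.map (fun r => Polynomial.X + Polynomial.C r)).prod
      = (t.map (fun r => Polynomial.X + Polynomial.C r)).prod := by
    rw [Multiset.prod_X_add_C_eq_sum_esymm, Multiset.prod_X_add_C_eq_sum_esymm, hc]
    refine Finset.sum_congr rfl fun j hj => ?_
    rw [hes j (by rw [hc]; exact Nat.lt_succ_iff.mp (Finset.mem_range.mp hj))]
  have hneg : ∀ u : Multiset ℝ, (u.map (fun r => Polynomial.X + Polynomial.C r))
      = (u.map (fun r : ℝ => -r)).map (fun a => Polynomial.X - Polynomial.C a) := by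
    intro u
    rw [Multiset.map_map]
    refine Multiset.map_congr rfl fun r _ => ?_
    simp [sub_neg_eq_add]
  rw [hneg, hneg] at hprod
  have h1 := congrArg Polynomial.roots hprod
  rw [Polynomial.roots_multiset_prod_X_sub_C, Polynomial.roots_multiset_prod_X_sub_C] at h1
  exact Multiset.map_injective (f := fun r : ℝ => -r) neg_injective h1

/-- Hockey-stick identity. -/
lemma hockey (ℓ n : ℕ) (hℓ : 1 ≤ ℓ) :
    ∑ j ∈ Icc ℓ n, (j - 1).choose (ℓ - 1) = n.choose ℓ := by
  rcases lt_or_ge n ℓ with hn | hn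
  · rw [Finset.Icc_eq_empty (by omega), Finset.sum_empty, Nat.choose_eq_zero_of_lt hn]
  · have h1 : Icc ℓ n = (Icc (ℓ - 1) (n - 1)).map (addRightEmbedding 1) := by
      rw [Finset.map_add_right_Icc]
      congr 1 <;> omega
    rw [h1, Finset.sum_map]
    have h2 : ∀ i ∈ Icc (ℓ - 1) (n - 1),
        (addRightEmbedding 1 i - 1).choose (ℓ - 1) = i.choose (ℓ - 1) := by
      intro i _
      simp [addRightEmbedding]
    rw [Finset.sum_congr rfl h2, Nat.sum_Icc_choose]
    congr 1 <;> omega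

/-- The power sums of the filter masses at level `ℓ` are linear combinations of the
probabilities `Pr[F_j^k]`, `j ≥ ℓ`. -/
lemma identityI {M : Type} [Fintype M] [DecidableEq M] (μ : Finset M → ℝ)
    (ℓ : ℕ) (hℓ : 1 ≤ ℓ) (k : ℕ) :
    ∑ X ∈ powersetCard ℓ (univ : Finset M), (filterMass μ X) ^ k
      = ∑ j ∈ Icc ℓ (Fintype.card M), ((j - 1).choose (ℓ - 1) : ℝ) * prF μ j k := by
  have expand : ∀ X : Finset M, (filterMass μ X) ^ k
      = ∑ Y : Fin k → Finset M, (if ∀ i, X ⊆ Y i then ∏ i, μ (Y i) else 0) := by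
    intro X
    have h1 : (filterMass μ X) ^ k = ∏ _i : Fin k, filterMass μ X := by
      simp [Finset.prod_const]
    rw [h1]
    have h2 : ∀ i : Fin k, filterMass μ X = ∑ Y : Finset M, (if X ⊆ Y then μ Y else 0) := by
      intro i
      rw [filterMass, Finset.sum_filter]
    rw [Finset.prod_congr rfl (fun i _ => h2 i), Finset.prod_univ_sum]
    rw [Fintype.piFinset_univ]
    refine Finset.sum_congr rfl fun Y _ => ?_
    rw [Finset.prod_ite_zero]
    simp
  have lhs_eq : ∑ X ∈ powersetCard ℓ (univ : Finset M), (filterMass μ X) ^ k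
      = ∑ Y : Fin k → Finset M,
          (((Finset.univ.inf Y).card.choose ℓ : ℝ)) * ∏ i, μ (Y i) := by
    rw [Finset.sum_congr rfl fun X _ => expand X, Finset.sum_comm]
    refine Finset.sum_congr rfl fun Y _ => ?_
    have h3 : ∀ X : Finset M, (∀ i, X ⊆ Y i) ↔ X ⊆ Finset.univ.inf Y := fun X =>
      ⟨fun h => Finset.le_inf fun i _ => h i,
       fun h i => h.trans (Finset.inf_le (Finset.mem_univ i))⟩
    rw [Finset.sum_congr rfl fun X _ => if_congr (h3 X) rfl rfl]
    rw [← Finset.sum_filter]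
    have h4 : (powersetCard ℓ (univ : Finset M)).filter (fun X => X ⊆ Finset.univ.inf Y)
        = powersetCard ℓ (Finset.univ.inf Y) := by
      ext X
      simp only [Finset.mem_filter, Finset.mem_powersetCard]
      exact ⟨fun h => ⟨h.2, h.1.2⟩, fun h => ⟨⟨Finset.subset_univ X, h.2⟩, h.1⟩⟩
    rw [h4, Finset.sum_const, Finset.card_powersetCard]
    simp [mul_comm]
  rw [lhs_eq]
  unfold prF
  have point : ∀ n : ℕ, n ≤ Fintype.card M → ∀ P : ℝ,
      ∑ j ∈ Icc ℓ (Fintype.card M), ((j - 1).choose (ℓ - 1) : ℝ) * (if j ≤ n then P else 0)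
        = (n.choose ℓ : ℝ) * P := by
    intro n hn P
    have h5 : ∀ j ∈ Icc ℓ (Fintype.card M),
        ((j - 1).choose (ℓ - 1) : ℝ) * (if j ≤ n then P else 0)
          = if j ≤ n then ((j - 1).choose (ℓ - 1) : ℝ) * P else 0 := by
      intro j _
      split <;> simp
    rw [Finset.sum_congr rfl h5, ← Finset.sum_filter]
    have h6 : (Icc ℓ (Fintype.card M)).filter (fun j => j ≤ n) = Icc ℓ n := by
      ext j
      simp only [Finset.mem_filter, Finset.mem_Icc]
      omega
    rw [h6, ← Finset.sum_mul, ← hockey ℓ n hℓ]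
    push_cast
    ring
  have step : ∑ j ∈ Icc ℓ (Fintype.card M), ((j - 1).choose (ℓ - 1) : ℝ) *
        (∑ Y : Fin k → Finset M, if j ≤ (Finset.univ.inf Y).card then ∏ i, μ (Y i) else 0)
      = ∑ Y : Fin k → Finset M, ∑ j ∈ Icc ℓ (Fintype.card M),
          ((j - 1).choose (ℓ - 1) : ℝ) *
            (if j ≤ (Finset.univ.inf Y).card then ∏ i, μ (Y i) else 0) := by
    rw [Finset.sum_congr rfl fun j _ => Finset.mul_sum _ _ _, Finset.sum_comm]
  rw [step]
  refine Finset.sum_congr rfl fun Y _ => ?_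
  rw [point (Finset.univ.inf Y).card (Finset.card_le_univ _) (∏ i, μ (Y i))]

/-- The multiset of filter masses at level ℓ. -/
def massMultiset {M : Type} [Fintype M] [DecidableEq M] (μ : Finset M → ℝ) (ℓ : ℕ) :
    Multiset ℝ :=
  (Finset.univ : Finset {X : Finset M // X.card = ℓ}).val.map (fun X => filterMass μ X.1)

lemma massMultiset_card {M : Type} [Fintype M] [DecidableEq M] (μ : Finset M → ℝ) (ℓ : ℕ) :
    Multiset.card (massMultiset μ ℓ) = (Fintype.card M).choose ℓ := by
  rw [massMultiset, Multiset.card_map, ← Fintype.card_finset_len ℓ]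
  rfl

lemma massMultiset_psum {M : Type} [Fintype M] [DecidableEq M] (μ : Finset M → ℝ) (ℓ k : ℕ) :
    ((massMultiset μ ℓ).map (· ^ k)).sum
      = ∑ X ∈ powersetCard ℓ (univ : Finset M), (filterMass μ X) ^ k := by
  rw [Finset.sum_subtype _ (fun X => Finset.mem_powersetCard_univ)
      (fun X => (filterMass μ X) ^ k),
    Finset.sum_eq_multiset_sum, massMultiset, Multiset.map_map]
  rfl

/-- If all the probabilities `Pr[F_ℓ^k]` (for the relevant range of `k`) coincide, then the
multisets of filter masses coincide at every level. -/
lemma exact_det {M : Type} [Fintype M] [DecidableEq M] (μ ν : Finset M → ℝ)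
    (h : ∀ ℓ ≤ Fintype.card M, ∀ k, 1 ≤ k → k ≤ (Fintype.card M).choose ℓ →
      prF μ ℓ k = prF ν ℓ k) :
    ∀ ℓ, 1 ≤ ℓ → ℓ ≤ Fintype.card M → massMultiset μ ℓ = massMultiset ν ℓ := by
  set m := Fintype.card M with hm
  have key : ∀ t : ℕ, ∀ ℓ, 1 ≤ ℓ → ℓ ≤ m → m - ℓ = t →
      massMultiset μ ℓ = massMultiset ν ℓ ∧ ∀ k, 1 ≤ k → prF μ ℓ k = prF ν ℓ k := by
    intro t
    induction t using Nat.strong_induction_on with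
    | _ t IH =>
      intro ℓ h1 h2 ht
      have IHj : ∀ j, ℓ < j → j ≤ m →
          massMultiset μ j = massMultiset ν j ∧ ∀ k, 1 ≤ k → prF μ j k = prF ν j k :=
        fun j hj1 hj2 => IH (m - j) (by omega) j (by omega) hj2 rfl
      have hprFj : ∀ j, ℓ < j → j ≤ m → ∀ k, 1 ≤ k → prF μ j k = prF ν j k :=
        fun j hj1 hj2 => (IHj j hj1 hj2).2
      have hpsum : ∀ k, 1 ≤ k → k ≤ m.choose ℓ →
          ∑ X ∈ powersetCard ℓ (univ : Finset M), (filterMass μ X) ^ k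
            = ∑ X ∈ powersetCard ℓ (univ : Finset M), (filterMass ν X) ^ k := by
        intro k hk1 hk2
        rw [identityI μ ℓ h1 k, identityI ν ℓ h1 k]
        refine Finset.sum_congr rfl fun j hj => ?_
        rw [Finset.mem_Icc] at hj
        rcases eq_or_lt_of_le hj.1 with rfl | hlt
        · rw [h ℓ h2 k hk1 hk2]
        · rw [hprFj j hlt hj.2 k hk1]
      have hA : massMultiset μ ℓ = massMultiset ν ℓ := by
        refine multiset_eq_of_psum_eq _ _ (by rw [massMultiset_card, massMultiset_card]) ?_
        intro k hk1 hk2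
        rw [massMultiset_card] at hk2
        rw [massMultiset_psum, massMultiset_psum]
        exact hpsum k hk1 hk2
      refine ⟨hA, fun k hk1 => ?_⟩
      have hPk : ∑ X ∈ powersetCard ℓ (univ : Finset M), (filterMass μ X) ^ k
          = ∑ X ∈ powersetCard ℓ (univ : Finset M), (filterMass ν X) ^ k := by
        rw [← massMultiset_psum, ← massMultiset_psum, hA]
      have hsplit : ∀ ρ : Finset M → ℝ,
          ∑ j ∈ Icc ℓ m, ((j - 1).choose (ℓ - 1) : ℝ) * prF ρ j k
            = prF ρ ℓ k + ∑ j ∈ Ioc ℓ m, ((j - 1).choose (ℓ - 1) : ℝ) * prF ρ j k := by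
        intro ρ
        rw [Finset.Icc_eq_cons_Ioc h2, Finset.sum_cons, Nat.choose_self]
        norm_num
      have hId1 := identityI μ ℓ h1 k
      have hId2 := identityI ν ℓ h1 k
      rw [hsplit] at hId1 hId2
      have hIoc : ∑ j ∈ Ioc ℓ m, ((j - 1).choose (ℓ - 1) : ℝ) * prF μ j k
          = ∑ j ∈ Ioc ℓ m, ((j - 1).choose (ℓ - 1) : ℝ) * prF ν j k := by
        refine Finset.sum_congr rfl fun j hj => ?_
        rw [Finset.mem_Ioc] at hj
        rw [hprFj j hj.1 hj.2 k hk1]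
      have h7 := hPk
      rw [hId1, hId2, hIoc] at h7
      linarith
  exact fun ℓ h1 h2 => (key (m - ℓ) ℓ h1 h2 rfl).1

lemma continuous_prF {M : Type} [Fintype M] [DecidableEq M] (ℓ k : ℕ) :
    Continuous fun ρ : Finset M → ℝ => prF ρ ℓ k := by
  unfold prF
  refine continuous_finset_sum _ fun X _ => ?_
  by_cases hc : ℓ ≤ (Finset.univ.inf X).card
  · simp only [if_pos hc]
    exact continuous_finset_prod _ fun i _ => continuous_apply (X i)
  · simp only [if_neg hc]
    exact continuous_const

lemma continuous_filterMass {M : Type} [Fintype M] [DecidableEq M] (X : Finset M) :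
    Continuous fun ρ : Finset M → ℝ => filterMass ρ X := by
  unfold filterMass
  exact continuous_finset_sum _ fun Y _ => continuous_apply Y

lemma filterMass_empty {M : Type} [Fintype M] [DecidableEq M] (μ : Finset M → ℝ) :
    filterMass μ ∅ = ∑ Y : Finset M, μ Y := by
  unfold filterMass
  congr 1
  simp

/-- continuity in Lemma about finite boolean lattices. The multisets
`A_ℓ = {μ(X^↑) : |X| = ℓ}` depend continuously on the probabilities `Pr[F_ℓ^k]`. -/
theorem prF_determines_filter_masses_continuously
    {M : Type} [Fintype M] [DecidableEq M] (m : ℕ) (hm : Fintype.card M = m)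
    (μ : Finset M → ℝ) (hμ0 : ∀ X, 0 ≤ μ X) (hμ1 : ∑ X : Finset M, μ X = 1)
    (ε : ℝ) (hε : 0 < ε) :
    ∃ δ > (0 : ℝ), ∀ μ' : Finset M → ℝ,
      (∀ X, 0 ≤ μ' X) → (∑ X : Finset M, μ' X = 1) →
      (∀ ℓ ≤ m, ∀ k, 1 ≤ k → k ≤ m.choose ℓ → |prF μ ℓ k - prF μ' ℓ k| < δ) →
      ∀ ℓ ≤ m, ∃ σ : {X : Finset M // X.card = ℓ} ≃ {X : Finset M // X.card = ℓ},
        ∀ X : {X : Finset M // X.card = ℓ},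
          |filterMass μ X.1 - filterMass μ' (σ X).1| < ε := by
  subst hm
  set m := Fintype.card M with hm
  by_contra hcon
  push_neg at hcon
  have hchoice : ∀ n : ℕ, ∃ μ' : Finset M → ℝ,
      (∀ X, 0 ≤ μ' X) ∧ (∑ X : Finset M, μ' X = 1) ∧
      (∀ ℓ ≤ m, ∀ k, 1 ≤ k → k ≤ m.choose ℓ →
        |prF μ ℓ k - prF μ' ℓ k| < 1 / (n + 1)) ∧
      ∃ ℓ ≤ m, ∀ σ : {X : Finset M // X.card = ℓ} ≃ {X : Finset M // X.card = ℓ},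
        ∃ X : {X : Finset M // X.card = ℓ},
          ε ≤ |filterMass μ X.1 - filterMass μ' (σ X).1| := by
    intro n
    exact hcon (1 / (n + 1)) (by positivity)
  choose u hu0 hu1 huclose hufail using hchoice
  -- the simplex is compact
  set S : Set (Finset M → ℝ) := {ρ | (∀ X, 0 ≤ ρ X) ∧ ∑ X : Finset M, ρ X = 1} with hSdef
  have hSclosed : IsClosed S := by
    have : S = (⋂ X : Finset M, {ρ : Finset M → ℝ | 0 ≤ ρ X})
        ∩ {ρ : Finset M → ℝ | ∑ X : Finset M, ρ X = 1} := by
      ext ρ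
      simp [hSdef, Set.mem_iInter]
    rw [this]
    exact IsClosed.inter
      (isClosed_iInter fun X => isClosed_le continuous_const (continuous_apply X))
      (isClosed_eq (continuous_finset_sum _ fun Y _ => continuous_apply Y) continuous_const)
  have hSsub : S ⊆ Set.Icc (fun _ => (0 : ℝ)) (fun _ => (1 : ℝ)) := by
    rintro ρ ⟨h0, h1⟩
    refine ⟨fun X => h0 X, fun X => ?_⟩
    calc ρ X ≤ ∑ Y : Finset M, ρ Y :=
          Finset.single_le_sum (fun Y _ => h0 Y) (Finset.mem_univ X)
      _ = 1 := h1
  have hScompact : IsCompact S :=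
    IsCompact.of_isClosed_subset isCompact_Icc hSclosed hSsub
  have huS : ∀ n, u n ∈ S := fun n => ⟨hu0 n, hu1 n⟩
  obtain ⟨a, haS, φ, hφ, hlim⟩ := hScompact.tendsto_subseq huS
  -- the limit has the same prF values as μ
  have hprFa : ∀ ℓ ≤ m, ∀ k, 1 ≤ k → k ≤ m.choose ℓ → prF μ ℓ k = prF a ℓ k := by
    intro ℓ hℓ k hk1 hk2
    have t1 : Filter.Tendsto (fun n => prF (u (φ n)) ℓ k) Filter.atTop (nhds (prF a ℓ k)) :=
      ((continuous_prF ℓ k).tendsto a).comp hlim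
    have t0 : Filter.Tendsto (fun n => prF μ ℓ k - prF (u (φ n)) ℓ k)
        Filter.atTop (nhds 0) := by
      refine squeeze_zero_norm (a := fun n : ℕ => 1 / (n + 1)) ?_ ?_
      · intro n
        have hb := huclose (φ n) ℓ hℓ k hk1 hk2
        have hmn : (1 : ℝ) / (φ n + 1) ≤ 1 / (n + 1) := by
          apply one_div_le_one_div_of_le (by positivity)
          have hna : (n : ℝ) ≤ φ n := by exact_mod_cast hφ.le_apply
          linarith
        calc ‖prF μ ℓ k - prF (u (φ n)) ℓ k‖ = |prF μ ℓ k - prF (u (φ n)) ℓ k| := rfl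
          _ ≤ 1 / (φ n + 1) := le_of_lt hb
          _ ≤ 1 / (n + 1) := hmn
      · exact tendsto_one_div_add_atTop_nhds_zero_nat
    have t2 : Filter.Tendsto (fun n => prF (u (φ n)) ℓ k) Filter.atTop (nhds (prF μ ℓ k)) := by
      have := Filter.Tendsto.sub (tendsto_const_nhds (x := prF μ ℓ k)
        (f := Filter.atTop (α := ℕ))) t0
      simpa using this
    exact tendsto_nhds_unique t2 t1
  -- hence the mass multisets of μ and a agree at every level
  have hAeq : ∀ ℓ, 1 ≤ ℓ → ℓ ≤ m → massMultiset μ ℓ = massMultiset a ℓ :=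
    exact_det μ a hprFa
  -- exact bijections between μ and a
  have hσ : ∀ ℓ : ℕ, ∃ σ : Equiv.Perm {X : Finset M // X.card = ℓ}, ℓ ≤ m →
      ∀ X : {X : Finset M // X.card = ℓ}, filterMass μ X.1 = filterMass a (σ X).1 := by
    intro ℓ
    rcases Nat.eq_zero_or_pos ℓ with rfl | hℓ1
    · refine ⟨Equiv.refl _, fun _ X => ?_⟩
      have hX : X.1 = ∅ := Finset.card_eq_zero.mp X.2
      simp only [Equiv.refl_apply, hX, filterMass_empty, hμ1, haS.2]
    · by_cases hℓm : ℓ ≤ m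
      · obtain ⟨σ, hσ⟩ := exists_perm_of_map_eq
          (fun X : {X : Finset M // X.card = ℓ} => filterMass μ X.1)
          (fun X => filterMass a X.1) (hAeq ℓ hℓ1 hℓm)
        exact ⟨σ, fun _ => hσ⟩
      · exact ⟨Equiv.refl _, fun h => absurd h hℓm⟩
  choose σs hσs using hσ
  -- eventually all the bijections work for u (φ n)
  have hev : ∀ᶠ n in Filter.atTop, ∀ ℓ ∈ Finset.range (m + 1),
      ∀ X : {X : Finset M // X.card = ℓ},
        |filterMass μ X.1 - filterMass (u (φ n)) ((σs ℓ) X).1| < ε := by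
    rw [Filter.eventually_all_finset]
    intro ℓ hℓ
    rw [Filter.eventually_all]
    intro X
    have hℓm : ℓ ≤ m := Nat.lt_succ_iff.mp (Finset.mem_range.mp hℓ)
    have t1 : Filter.Tendsto (fun n => filterMass (u (φ n)) ((σs ℓ) X).1)
        Filter.atTop (nhds (filterMass a ((σs ℓ) X).1)) :=
      ((continuous_filterMass _).tendsto a).comp hlim
    have t3 : Filter.Tendsto
        (fun n => |filterMass μ X.1 - filterMass (u (φ n)) ((σs ℓ) X).1|)
        Filter.atTop (nhds |filterMass μ X.1 - filterMass a ((σs ℓ) X).1|) :=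
      (continuous_abs.tendsto _).comp
        ((tendsto_const_nhds (x := filterMass μ X.1) (f := Filter.atTop (α := ℕ))).sub t1)
    have hzero : |filterMass μ X.1 - filterMass a ((σs ℓ) X).1| = 0 := by
      rw [hσs ℓ hℓm X]
      simp
    rw [hzero] at t3
    exact t3.eventually_lt_const hε
  obtain ⟨n0, hn0⟩ := hev.exists
  obtain ⟨ℓ0, hℓ0, hfail⟩ := hufail (φ n0)
  obtain ⟨X, hX⟩ := hfail (σs ℓ0)
  have := hn0 ℓ0 (Finset.mem_range.mpr (Nat.lt_succ_of_le hℓ0)) X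
  linarith
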